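/- Fix an integer c ≥ 2 and let G = A + M (with A a spanning double tree and E(G) = E(A) ⊔ E(M)) be a finite graph with no c-balanced decomposition G = G1 ⊔ G2 in which A ∩ G1 and A ∩ G2 are spanning trees, chosen so that e(M) is minimal and, subject to this, |V(G)| is minimal. Then no vertex of G is both adjacent to a vertex of degree 2 and incident to an edge of M. -/

import Mathlib

/-- A multigraph without loops: edges `E` with an endpoint map into unordered
pairs of vertices, no edge being a loop. -/
structure Multigraph (V : Type*) (E : Type*) where
  ends : E → Sym2 V
  loopless : ∀ e, ¬ (ends e).IsDiag

namespace Multigraph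

variable {V E : Type*}

/-- `a` and `b` are joined by an edge belonging to the edge set `S`. -/
def Adj (G : Multigraph V E) (S : Set E) (a b : V) : Prop :=
  ∃ e ∈ S, G.ends e = s(a, b)

/-- Reachability in the spanning subgraph with edge set `S`. -/
def Reachable (G : Multigraph V E) (S : Set E) (a b : V) : Prop :=
  Relation.ReflTransGen (G.Adj S) a b

/-- The spanning subgraph with edge set `S` is connected. -/
def Connected (G : Multigraph V E) (S : Set E) : Prop :=
  ∀ a b : V, G.Reachable S a b

/-- The spanning subgraph with edge set `S` is acyclic: every edge of `S`
is a bridge of `S`. -/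
def Acyclic (G : Multigraph V E) (S : Set E) : Prop :=
  ∀ e ∈ S, ∀ a b : V, G.ends e = s(a, b) → ¬ G.Reachable (S \ {e}) a b

/-- `S` is the edge set of a spanning tree: connected and acyclic. -/
def IsSpanningTree (G : Multigraph V E) (S : Set E) : Prop :=
  G.Connected S ∧ G.Acyclic S

/-- The edges of `S` incident to `v`. -/
def incEdges (G : Multigraph V E) (S : Set E) (v : V) : Set E :=
  {e ∈ S | v ∈ G.ends e}

/-- The degree of `v` in the spanning subgraph with edge set `S`. -/
noncomputable def deg (G : Multigraph V E) (S : Set E) (v : V) : ℕ :=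
  (G.incEdges S v).ncard

/-- `T1, T2` form a double tree decomposition of `G`: they partition the
edges of `G` and are both spanning trees. -/
def IsDTD (G : Multigraph V E) (T1 T2 : Set E) : Prop :=
  T1 ∪ T2 = Set.univ ∧ Disjoint T1 T2 ∧ G.IsSpanningTree T1 ∧ G.IsSpanningTree T2

/-- `G` is a double tree: the edge-disjoint union of two spanning trees. -/
def IsDoubleTree (G : Multigraph V E) : Prop :=
  ∃ T1 T2, G.IsDTD T1 T2

/-- A decomposition into two spanning subgraphs is `c`-balanced if at each
vertex the two degrees differ by at most `c`. -/
def Balanced (G : Multigraph V E) (c : ℕ) (S1 S2 : Set E) : Prop :=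
  ∀ v : V, |(G.deg S1 v : ℤ) - (G.deg S2 v : ℤ)| ≤ (c : ℤ)

end Multigraph

namespace Multigraph

variable {V E : Type*}

/-- `G` admits no `c`-balanced double tree decomposition. -/
def NoBalancedDTD (c : ℕ) (G : Multigraph V E) : Prop :=
  ¬ ∃ T1 T2 : Set E, G.IsDTD T1 T2 ∧ G.Balanced c T1 T2

/-- `v` is big: its degree exceeds `c + 2`. -/
def Big (G : Multigraph V E) (c : ℕ) (v : V) : Prop :=
  c + 2 < G.deg Set.univ v

/-- `v` is small: its degree is at most `c + 2`. -/
def Small (G : Multigraph V E) (c : ℕ) (v : V) : Prop :=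
  G.deg Set.univ v ≤ c + 2

/-- `u` and `z` are joined by a double edge. -/
def DoubleEdge (G : Multigraph V E) (u z : V) : Prop :=
  ∃ e1 e2 : E, e1 ≠ e2 ∧ G.ends e1 = s(u, z) ∧ G.ends e2 = s(u, z)

/-- `u` is a bad 3-vertex: it has degree 3, a small neighbour, and is joined
to a big vertex by a double edge. -/
def Bad3 (G : Multigraph V E) (c : ℕ) (u : V) : Prop :=
  G.deg Set.univ u = 3 ∧
  (∃ w, G.Adj Set.univ u w ∧ G.Small c w) ∧
  (∃ z, G.DoubleEdge u z ∧ G.Big c z)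

/-- `u` is a poor 3-vertex: it has degree 3 and three distinct neighbours,
two big and one small. -/
def Poor3 (G : Multigraph V E) (c : ℕ) (u : V) : Prop :=
  G.deg Set.univ u = 3 ∧
  ∃ x y s : V, x ≠ y ∧ x ≠ s ∧ y ≠ s ∧
    G.Adj Set.univ u x ∧ G.Adj Set.univ u y ∧ G.Adj Set.univ u s ∧
    G.Big c x ∧ G.Big c y ∧ G.Small c s

end Multigraph

namespace Multigraph

variable {V E : Type*}

/-- `G` admits a `c`-balanced decomposition `G1 ⊔ G2` such that `A ∩ G1` and
`A ∩ G2` are spanning trees. -/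
def GoodDecomp (G : Multigraph V E) (c : ℕ) (A : Set E) : Prop :=
  ∃ G1 G2 : Set E, G1 ∪ G2 = Set.univ ∧ Disjoint G1 G2 ∧
    G.Balanced c G1 G2 ∧
    G.IsSpanningTree (A ∩ G1) ∧ G.IsSpanningTree (A ∩ G2)

/-- The setup `G = A + M` being a counterexample: `A, M` partition the edges
of `G`, `A` is a spanning double tree, and `G` has no `c`-balanced
decomposition whose restrictions to `A` are spanning trees. -/
def AMCounterexample (G : Multigraph V E) (c : ℕ) (A M : Set E) : Prop :=
  A ∪ M = Set.univ ∧ Disjoint A M ∧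
  (∃ T1 T2 : Set E, T1 ∪ T2 = A ∧ Disjoint T1 T2 ∧
    G.IsSpanningTree T1 ∧ G.IsSpanningTree T2) ∧
  ¬ G.GoodDecomp c A

end Multigraph
namespace Multigraph

section Basic

variable {V E : Type*} {G : Multigraph V E} {S : Set E}

lemma adj_mono {S S' : Set E} (h : S ⊆ S') {a b : V} (hab : G.Adj S a b) :
    G.Adj S' a b := by
  obtain ⟨g, hg, hgE⟩ := hab
  exact ⟨g, h hg, hgE⟩

lemma reachable_mono {S S' : Set E} (h : S ⊆ S') {a b : V}
    (hab : G.Reachable S a b) : G.Reachable S' a b :=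
  Relation.ReflTransGen.mono (fun _ _ => adj_mono h) _ _ hab

lemma ends_ne {g : E} {a b : V} (h : G.ends g = s(a, b)) : a ≠ b := by
  intro hab
  exact G.loopless g (by rw [h, Sym2.mk_isDiag_iff]; exact hab)

/-- In a connected edge set, any vertex distinct from another one has an
incident edge. -/
lemma exists_inc (hconn : G.Connected S) {a b : V} (hab : a ≠ b) :
    ∃ g ∈ S, a ∈ G.ends g := by
  rcases (hconn a b).cases_head with h | ⟨c, ⟨g, hg, hgE⟩, _⟩
  · exact absurd h hab
  · exact ⟨g, hg, by rw [hgE]; exact Sym2.mem_mk_left a c⟩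

/-- The only vertex reachable from `u` using edges none of which is incident
to `u` is `u` itself. -/
lemma reach_from_isolated {u b : V} (hS : ∀ g ∈ S, u ∉ G.ends g)
    (h : G.Reachable S u b) : b = u := by
  rcases h.cases_head with h | ⟨c, ⟨g, hg, hgE⟩, _⟩
  · exact h.symm
  · exact absurd (by rw [hgE]; exact Sym2.mem_mk_left u c) (hS g hg)

lemma reach_to_isolated {u a : V} (hS : ∀ g ∈ S, u ∉ G.ends g)
    (h : G.Reachable S a u) : a = u := by
  induction h with
  | refl => rfl
  | tail _ hcb ih =>
      obtain ⟨g, hg, hgE⟩ := hcb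
      exact absurd (by rw [hgE]; exact Sym2.mem_mk_right _ _) (hS g hg)

end Basic

end Multigraph
namespace Multigraph

open Classical in
lemma test_choice : True := trivial

section Deg

variable {V E : Type*} {G : Multigraph V E}

lemma incEdges_union (S T : Set E) (y : V) :
    G.incEdges (S ∪ T) y = G.incEdges S y ∪ G.incEdges T y := by
  ext g; simp only [incEdges, Set.mem_setOf_eq, Set.mem_union]; tauto

lemma deg_union (S T : Set E) (y : V) (h : Disjoint S T) (hS : S.Finite)
    (hT : T.Finite) : G.deg (S ∪ T) y = G.deg S y + G.deg T y := by
  rw [deg, incEdges_union]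
  exact Set.ncard_union_eq
    (Set.disjoint_of_subset (Set.sep_subset _ _) (Set.sep_subset _ _) h)
    (hS.subset (Set.sep_subset _ _)) (hT.subset (Set.sep_subset _ _))

open Classical in
lemma deg_singleton (g : E) (y : V) :
    G.deg {g} y = if y ∈ G.ends g then 1 else 0 := by
  by_cases h : y ∈ G.ends g
  · rw [if_pos h, deg, show G.incEdges {g} y = {g} by
      ext; simp only [incEdges, Set.mem_setOf_eq, Set.mem_singleton_iff]
      constructor
      · tauto
      · rintro rfl; exact ⟨rfl, h⟩]
    simp
  · rw [if_neg h, deg, show G.incEdges {g} y = ∅ by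
      ext; simp only [incEdges, Set.mem_setOf_eq, Set.mem_empty_iff_false, iff_false]
      rintro ⟨rfl, hy⟩; exact h hy]
    simp

lemma deg_zero_of_no_inc {S : Set E} {y : V} (h : ∀ g ∈ S, y ∉ G.ends g) :
    G.deg S y = 0 := by
  rw [deg, show G.incEdges S y = ∅ by
    ext g
    simp only [incEdges, Set.mem_setOf_eq, Set.mem_empty_iff_false, iff_false]
    rintro ⟨hg, hy⟩; exact h g hg hy]
  simp

end Deg

section Reroute

variable {V E : Type*} [DecidableEq V] {G : Multigraph V E}

/-- Core rerouting lemma: if `e0` is the unique `S`-edge at `u`, with other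
endpoint `v0`, then any `S`-walk starting away from `u` can be rerouted to
avoid `u` and `e0` altogether (ending at `v0` in case it ended at `u`). -/
lemma reroute {S : Set E} {e0 : E} {u v0 : V}
    (huniq : ∀ g ∈ S, u ∈ G.ends g → g = e0) (hends : G.ends e0 = s(u, v0))
    {a b : V} (h : G.Reachable S a b) (ha : a ≠ u) :
    Relation.ReflTransGen (fun x y => x ≠ u ∧ y ≠ u ∧ G.Adj (S \ {e0}) x y)
      a (if b = u then v0 else b) := by
  induction h with
  | refl => rw [if_neg ha]
  | @tail c b hac hcb ih =>
      obtain ⟨g, hgS, hgE⟩ := hcb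
      by_cases hcu : c = u <;> by_cases hbu : b = u
      · subst hcu; subst hbu
        exact absurd hgE (fun h => ends_ne h rfl)
      · -- c = u, b ≠ u : the step is along e0, from u to v0, so b = v0
        subst hcu
        have hg0 : g = e0 := huniq g hgS (by rw [hgE]; exact Sym2.mem_mk_left _ _)
        have h2 : s(c, b) = s(c, v0) := by rw [← hgE, hg0, hends]
        rcases Sym2.eq_iff.mp h2 with ⟨-, hb⟩ | ⟨huv, -⟩
        · rw [if_neg hbu, hb]
          simpa using ih
        · exact absurd huv (ends_ne hends)
      · -- c ≠ u, b = u : the step is along e0, so c = v0, and we stop at c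
        subst hbu
        have hg0 : g = e0 := huniq g hgS (by rw [hgE]; exact Sym2.mem_mk_right _ _)
        have h2 : s(c, b) = s(b, v0) := by rw [← hgE, hg0, hends]
        rcases Sym2.eq_iff.mp h2 with ⟨hcu', -⟩ | ⟨hcv, -⟩
        · exact absurd hcu' hcu
        · rw [if_pos rfl, ← hcv]
          simpa [hcu] using ih
      · -- generic step, avoiding e0
        have hg0 : g ≠ e0 := by
          intro hg0
          have hu : u ∈ G.ends g := by rw [hg0, hends]; exact Sym2.mem_mk_left _ _
          rw [hgE, Sym2.mem_iff] at hu
          tauto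
        rw [if_neg hbu]
        exact Relation.ReflTransGen.tail (by simpa [hcu] using ih)
          ⟨hcu, hbu, g, ⟨hgS, hg0⟩, hgE⟩

end Reroute

end Multigraph
namespace Multigraph

set_option linter.unusedSectionVars false
section Transfer

variable {V E V' E' E₀ : Type*} [DecidableEq V]
  {G : Multigraph V E} {H : Multigraph V' E'}
  {ι : V' → V} {p : E₀ → E} {k : E₀ → E'}

section WithCompat

variable (hι : Function.Injective ι) (hp : Function.Injective p)
  (hk : Function.Injective k)
  (hcomp : ∀ g, Sym2.map ι (H.ends (k g)) = G.ends (p g))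

include hcomp in
lemma ends_transfer_down {g : E₀} {a' b' : V'} (h : H.ends (k g) = s(a', b')) :
    G.ends (p g) = s(ι a', ι b') := by
  rw [← hcomp, h]; rfl

include hι hcomp in
lemma ends_transfer_up {g : E₀} {a' b' : V'} (h : G.ends (p g) = s(ι a', ι b')) :
    H.ends (k g) = s(a', b') := by
  apply Sym2.map.injective hι
  rw [hcomp, h]; rfl

include hcomp in
lemma reach_up {S₀ : Set E₀} {a' b' : V'} (h : H.Reachable (k '' S₀) a' b') :
    G.Reachable (p '' S₀) (ι a') (ι b') := by
  induction h with
  | refl => exact Relation.ReflTransGen.refl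
  | tail _ hcb ih =>
      obtain ⟨g', ⟨g₀, hg₀, rfl⟩, hgE⟩ := hcb
      exact ih.tail ⟨p g₀, ⟨g₀, hg₀, rfl⟩, ends_transfer_down hcomp hgE⟩

include hι hcomp in
lemma reach_down {S₀ : Set E₀} {u : V} (hsurj : ∀ y, y ≠ u → ∃ y', ι y' = y)
    {a b : V}
    (h : Relation.ReflTransGen
      (fun x y => x ≠ u ∧ y ≠ u ∧ G.Adj (p '' S₀) x y) a b)
    {a' b' : V'} (ha : ι a' = a) (hb : ι b' = b) :
    H.Reachable (k '' S₀) a' b' := by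
  induction h generalizing b' with
  | refl =>
      rw [show a' = b' from hι (ha.trans hb.symm)]
      exact Relation.ReflTransGen.refl
  | @tail c b hac hcb ih =>
      obtain ⟨hcu, hbu, g, ⟨g₀, hg₀, rfl⟩, hgE⟩ := hcb
      obtain ⟨c', hc'⟩ := hsurj c hcu
      refine (ih hc').tail ⟨k g₀, ⟨g₀, hg₀, rfl⟩, ?_⟩
      exact ends_transfer_up hι hcomp (by rw [hc', hb, hgE])


section AvoidU

variable {u : V} (hnu : ∀ y', ι y' ≠ u) (hsurj : ∀ y, y ≠ u → ∃ y', ι y' = y)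
  (hpu : ∀ g, u ∉ G.ends (p g))

include hι hp hk hcomp hnu hsurj in
/-- Removing a leaf `u` (with unique tree edge `e0`) from a spanning tree of
`G` yields a spanning tree of the vertex-deleted graph `H`. -/
lemma treeDown {S : Set E} (hS : G.IsSpanningTree S) {e0 : E} {v0 : V}
    (huniq : ∀ g ∈ S, u ∈ G.ends g → g = e0) (hends : G.ends e0 = s(u, v0))
    {S₀ : Set E₀} (hS₀ : p '' S₀ = S \ {e0}) :
    H.IsSpanningTree (k '' S₀) := by
  constructor
  · intro a' b'
    have h := reroute huniq hends (hS.1 (ι a') (ι b')) (hnu a')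
    rw [if_neg (hnu b'), ← hS₀] at h
    exact reach_down hι hcomp hsurj h rfl rfl
  · rintro g' ⟨g₀, hg₀, rfl⟩ a' b' hE hreach
    have h1 : k '' S₀ \ {k g₀} = k '' (S₀ \ {g₀}) := by
      rw [Set.image_diff hk, Set.image_singleton]
    rw [h1] at hreach
    have h2 := reach_up hcomp hreach
    have h3 : p '' (S₀ \ {g₀}) ⊆ S \ {p g₀} := by
      rw [Set.image_diff hp, Set.image_singleton, hS₀]
      intro g hg
      exact ⟨(Set.diff_subset hg.1 : _), hg.2⟩
    have h4 : p g₀ ∈ S := by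
      have : p g₀ ∈ S \ {e0} := hS₀ ▸ ⟨g₀, hg₀, rfl⟩
      exact this.1
    exact hS.2 (p g₀) h4 (ι a') (ι b') (ends_transfer_down hcomp hE)
      (reachable_mono h3 h2)

include hι hp hk hcomp hnu hsurj hpu in
/-- Adding back a leaf `u` via an edge `e0 = u v0` to a spanning tree of the
vertex-deleted graph `H` yields a spanning tree of `G`. -/
lemma treeUp {S₀ : Set E₀} (hT : H.IsSpanningTree (k '' S₀)) {e0 : E} {v0 : V}
    (hends : G.ends e0 = s(u, v0)) (hne0 : ∀ g, p g ≠ e0) :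
    G.IsSpanningTree (p '' S₀ ∪ {e0}) := by
  have huv0 : u ≠ v0 := ends_ne hends
  obtain ⟨v0', hv0'⟩ := hsurj v0 (Ne.symm huv0)
  have hpS : ∀ g ∈ p '' S₀, u ∉ G.ends g := by
    rintro g ⟨g₀, hg₀, rfl⟩; exact hpu g₀
  have hrin : ∀ a' b', G.Reachable (p '' S₀ ∪ {e0}) (ι a') (ι b') :=
    fun a' b' => reachable_mono Set.subset_union_left (reach_up hcomp (hT.1 a' b'))
  have hstep : G.Adj (p '' S₀ ∪ {e0}) u v0 :=
    ⟨e0, Set.mem_union_right _ rfl, hends⟩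
  constructor
  · intro a b
    by_cases hau : a = u <;> by_cases hbu : b = u
    · rw [hau, hbu]
      exact Relation.ReflTransGen.refl
    · obtain ⟨b', hb'⟩ := hsurj b hbu
      subst hau
      exact Relation.ReflTransGen.head hstep (hv0' ▸ hb' ▸ hrin v0' b')
    · obtain ⟨a', ha'⟩ := hsurj a hau
      subst hbu
      exact Relation.ReflTransGen.tail (hv0' ▸ ha' ▸ hrin a' v0')
        ⟨e0, Set.mem_union_right _ rfl, by rwa [Sym2.eq_swap] at hends⟩
    · obtain ⟨a', ha'⟩ := hsurj a hau
      obtain ⟨b', hb'⟩ := hsurj b hbu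
      exact ha' ▸ hb' ▸ hrin a' b'
  · rintro g hg a b hE hreach
    rcases hg with ⟨g₀, hg₀, rfl⟩ | hg
    · -- g is an old edge: reroute the walk away from u and project it down
      have hab_ne_u : a ≠ u ∧ b ≠ u := by
        constructor <;> intro h <;> subst h <;>
          exact hpu g₀ (by rw [hE]; first
            | exact Sym2.mem_mk_left _ _
            | exact Sym2.mem_mk_right _ _)
      have huniq' : ∀ g ∈ (p '' S₀ ∪ {e0}) \ {p g₀}, u ∈ G.ends g → g = e0 := by
        rintro g ⟨hg1 | hg1, -⟩ hgu
        · exact absurd hgu (hpS g hg1)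
        · exact hg1
      have h := reroute huniq' hends hreach hab_ne_u.1
      rw [if_neg hab_ne_u.2] at h
      have hsub : ((p '' S₀ ∪ {e0}) \ {p g₀}) \ {e0} ⊆ p '' (S₀ \ {g₀}) := by
        rintro g ⟨⟨hg1 | hg1, hg2⟩, hg3⟩
        · obtain ⟨h₀, hh₀, rfl⟩ := hg1
          refine ⟨h₀, ⟨hh₀, ?_⟩, rfl⟩
          rintro rfl; exact hg2 rfl
        · exact absurd hg1 hg3
      have h' : Relation.ReflTransGen
          (fun x y => x ≠ u ∧ y ≠ u ∧ G.Adj (p '' (S₀ \ {g₀})) x y) a b :=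
        Relation.ReflTransGen.mono
          (fun x y hxy => ⟨hxy.1, hxy.2.1, adj_mono hsub hxy.2.2⟩) _ _ h
      obtain ⟨a', ha'⟩ := hsurj a hab_ne_u.1
      obtain ⟨b', hb'⟩ := hsurj b hab_ne_u.2
      have hHreach := reach_down hι hcomp hsurj h' ha' hb'
      rw [Set.image_diff hk, Set.image_singleton] at hHreach
      exact hT.2 (k g₀) ⟨g₀, hg₀, rfl⟩ a' b'
        (ends_transfer_up hι hcomp (by rw [ha', hb', hE])) hHreach
    · -- g = e0 : no walk can leave u again
      rcases hg with rfl
      have hset : (p '' S₀ ∪ {g}) \ {g} ⊆ p '' S₀ := by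
        rintro h ⟨hh1 | hh1, hh2⟩
        · exact hh1
        · exact absurd hh1 hh2
      have hE' : s(a, b) = s(u, v0) := by rw [← hE, hends]
      rcases Sym2.eq_iff.mp hE' with ⟨rfl, rfl⟩ | ⟨rfl, rfl⟩
      · exact huv0 ((reach_from_isolated
          (fun g' hg' => hpS g' (hset hg')) hreach).symm)
      · exact huv0 ((reach_to_isolated
          (fun g' hg' => hpS g' (hset hg')) hreach)).symm

include hι hp hk hcomp in
lemma deg_transfer (S₀ : Set E₀) (y' : V') :
    G.deg (p '' S₀) (ι y') = H.deg (k '' S₀) y' := by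
  have h1 : G.incEdges (p '' S₀) (ι y') = p '' {g ∈ S₀ | y' ∈ H.ends (k g)} := by
    ext g
    simp only [incEdges, Set.mem_setOf_eq, Set.mem_image]
    constructor
    · rintro ⟨⟨g₀, hg₀, rfl⟩, hy⟩
      refine ⟨g₀, ⟨hg₀, ?_⟩, rfl⟩
      rw [← hcomp] at hy
      obtain ⟨z, hz, hzy⟩ := Sym2.mem_map.mp hy
      rwa [← hι hzy]
    · rintro ⟨g₀, ⟨hg₀, hy⟩, rfl⟩
      exact ⟨⟨g₀, hg₀, rfl⟩, by rw [← hcomp]; exact Sym2.mem_map.mpr ⟨y', hy, rfl⟩⟩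
  have h2 : H.incEdges (k '' S₀) y' = k '' {g ∈ S₀ | y' ∈ H.ends (k g)} := by
    ext g'
    simp only [incEdges, Set.mem_setOf_eq, Set.mem_image]
    constructor
    · rintro ⟨⟨g₀, hg₀, rfl⟩, hy⟩
      exact ⟨g₀, ⟨hg₀, hy⟩, rfl⟩
    · rintro ⟨g₀, ⟨hg₀, hy⟩, rfl⟩
      exact ⟨⟨g₀, hg₀, rfl⟩, hy⟩
  rw [deg, deg, h1, h2, Set.ncard_image_of_injective _ hp,
    Set.ncard_image_of_injective _ hk]

include hpu in
lemma deg_at_u (S₀ : Set E₀) : G.deg (p '' S₀) u = 0 :=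
  deg_zero_of_no_inc (by rintro g ⟨g₀, hg₀, rfl⟩; exact hpu g₀)

end AvoidU

end WithCompat

end Transfer

end Multigraph
namespace Multigraph

section Iso

variable {V E V₂ E₂ : Type*}

/-- Transport of a multigraph along equivalences of vertices and edges. -/
def mapIso (G : Multigraph V E) (eV : V ≃ V₂) (eE : E ≃ E₂) :
    Multigraph V₂ E₂ where
  ends g := Sym2.map eV (G.ends (eE.symm g))
  loopless g := by
    intro h
    have h' : (Sym2.map eV (G.ends (eE.symm g))).IsDiag := h
    apply G.loopless (eE.symm g)
    obtain ⟨a, b, hab⟩ : ∃ a b, G.ends (eE.symm g) = s(a, b) := by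
      induction G.ends (eE.symm g) using Sym2.ind with | _ x y => exact ⟨x, y, rfl⟩
    rw [hab, Sym2.map_pair_eq, Sym2.mk_isDiag_iff] at h'
    rw [hab, Sym2.mk_isDiag_iff]
    exact eV.injective h' 

variable {G : Multigraph V E} {eV : V ≃ V₂} {eE : E ≃ E₂}

lemma mapIso_ends (g : E) :
    (G.mapIso eV eE).ends (eE g) = Sym2.map eV (G.ends g) := by
  simp [mapIso]

lemma mapIso_reach_up {S : Set E} {a b : V} (h : G.Reachable S a b) :
    (G.mapIso eV eE).Reachable (eE '' S) (eV a) (eV b) := by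
  induction h with
  | refl => exact Relation.ReflTransGen.refl
  | tail _ hcb ih =>
      obtain ⟨g, hg, hgE⟩ := hcb
      exact ih.tail ⟨eE g, ⟨g, hg, rfl⟩, by rw [mapIso_ends, hgE]; rfl⟩

lemma mapIso_reach_down {S : Set E} {x y : V₂}
    (h : (G.mapIso eV eE).Reachable (eE '' S) x y) :
    G.Reachable S (eV.symm x) (eV.symm y) := by
  induction h with
  | refl => exact Relation.ReflTransGen.refl
  | tail _ hcb ih =>
      obtain ⟨g', ⟨g, hg, rfl⟩, hgE⟩ := hcb
      refine ih.tail ⟨g, hg, ?_⟩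
      rw [mapIso_ends] at hgE
      have := congrArg (Sym2.map eV.symm) hgE
      rw [Sym2.map_map] at this
      simpa [Sym2.map_pair_eq] using this

lemma mapIso_spanningTree_up {S : Set E} (h : G.IsSpanningTree S) :
    (G.mapIso eV eE).IsSpanningTree (eE '' S) := by
  constructor
  · intro a b
    have := mapIso_reach_up (eV := eV) (eE := eE) (h.1 (eV.symm a) (eV.symm b))
    simpa using this
  · rintro g' ⟨g, hg, rfl⟩ a b hE hreach
    rw [show eE '' S \ {eE g} = eE '' (S \ {g}) by
      rw [Set.image_diff eE.injective, Set.image_singleton]] at hreach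
    have h2 := mapIso_reach_down hreach
    apply h.2 g hg (eV.symm a) (eV.symm b) _ h2
    rw [mapIso_ends] at hE
    have := congrArg (Sym2.map eV.symm) hE
    rw [Sym2.map_map] at this
    simpa [Sym2.map_pair_eq] using this

lemma mapIso_spanningTree_down {S : Set E}
    (h : (G.mapIso eV eE).IsSpanningTree (eE '' S)) : G.IsSpanningTree S := by
  constructor
  · intro a b
    have := mapIso_reach_down (h.1 (eV a) (eV b))
    simpa using this
  · rintro g hg a b hE hreach
    apply h.2 (eE g) ⟨g, hg, rfl⟩ (eV a) (eV b)
      (by rw [mapIso_ends, hE]; rfl)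
    rw [show eE '' S \ {eE g} = eE '' (S \ {g}) by
      rw [Set.image_diff eE.injective, Set.image_singleton]]
    exact mapIso_reach_up hreach

lemma mapIso_deg (S : Set E) (y : V) :
    (G.mapIso eV eE).deg (eE '' S) (eV y) = G.deg S y := by
  rw [deg, deg]
  have : (G.mapIso eV eE).incEdges (eE '' S) (eV y) = eE '' (G.incEdges S y) := by
    ext g'
    simp only [incEdges, Set.mem_setOf_eq, Set.mem_image]
    constructor
    · rintro ⟨⟨g, hg, rfl⟩, hy⟩
      refine ⟨g, ⟨hg, ?_⟩, rfl⟩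
      rw [mapIso_ends, Sym2.mem_map] at hy
      obtain ⟨z, hz, hzy⟩ := hy
      rwa [← eV.injective hzy]
    · rintro ⟨g, ⟨hg, hy⟩, rfl⟩
      exact ⟨⟨g, hg, rfl⟩, by rw [mapIso_ends, Sym2.mem_map]; exact ⟨y, hy, rfl⟩⟩
  rw [this, Set.ncard_image_of_injective _ eE.injective]

/-- Transport of a good decomposition back along an isomorphism. -/
lemma mapIso_goodDecomp_down {c : ℕ} {A : Set E}
    (h : (G.mapIso eV eE).GoodDecomp c (eE '' A)) : G.GoodDecomp c A := by
  obtain ⟨H1, H2, huniv, hdisj, hbal, ht1, ht2⟩ := h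
  refine ⟨eE.symm '' H1, eE.symm '' H2, ?_, ?_, ?_, ?_, ?_⟩
  · rw [← Set.image_union, huniv, Set.image_univ]
    exact eE.symm.surjective.range_eq
  · exact (Set.disjoint_image_iff eE.symm.injective).mpr hdisj
  · intro y
    have := hbal (eV y)
    rwa [show H1 = eE '' (eE.symm '' H1) by simp, show H2 = eE '' (eE.symm '' H2) by simp,
      mapIso_deg, mapIso_deg] at this
  · apply mapIso_spanningTree_down (eE := eE) (eV := eV)
    rwa [Set.image_inter eE.injective, show eE '' (eE.symm '' H1) = H1 by simp]
  · apply mapIso_spanningTree_down (eE := eE) (eV := eV)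
    rwa [Set.image_inter eE.injective, show eE '' (eE.symm '' H2) = H2 by simp]

/-- Transport of the counterexample property along an isomorphism. -/
lemma mapIso_counterexample {c : ℕ} {A M : Set E}
    (h : G.AMCounterexample c A M) :
    (G.mapIso eV eE).AMCounterexample c (eE '' A) (eE '' M) := by
  obtain ⟨huniv, hdisj, ⟨T1, T2, hT12, hTdisj, hT1, hT2⟩, hng⟩ := h
  refine ⟨?_, ?_, ⟨eE '' T1, eE '' T2, ?_, ?_, ?_, ?_⟩, ?_⟩
  · rw [← Set.image_union, huniv, Set.image_univ]
    exact eE.surjective.range_eq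
  · exact (Set.disjoint_image_iff eE.injective).mpr hdisj
  · rw [← Set.image_union, hT12]
  · exact (Set.disjoint_image_iff eE.injective).mpr hTdisj
  · exact mapIso_spanningTree_up hT1
  · exact mapIso_spanningTree_up hT2
  · intro hgd
    exact hng (mapIso_goodDecomp_down hgd)

end Iso

end Multigraph
namespace Multigraph

set_option linter.unusedSectionVars false
set_option maxHeartbeats 1000000

section Lift

variable {n m : ℕ}

/-- Case `w = x`: lifting a good decomposition of the reduced graph `H`
(obtained from `G` by deleting `u`, `e`, `e1`, `e2`) back to `G`. -/
lemma caseB_lift {c : ℕ} (hc : 2 ≤ c)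
    {G : Multigraph (Fin n) (Fin m)} {A : Set (Fin m)}
    {u v w x : Fin n} {e e1 e2 : Fin m}
    (hvu : v ≠ u)
    (hE1 : G.ends e1 = s(u, v)) (hE2 : G.ends e2 = s(u, w))
    (hEe : G.ends e = s(v, x)) (hwx : w = x)
    (hue : u ∉ G.ends e) (he12 : e1 ≠ e2)
    (he1A : e1 ∈ A) (he2A : e2 ∈ A) (heA : e ∉ A)
    (hpu : ∀ g : {g : Fin m // g ≠ e ∧ g ≠ e1 ∧ g ≠ e2}, u ∉ G.ends g.val)
    {H : Multigraph {y : Fin n // y ≠ u} {g : Fin m // g ≠ e ∧ g ≠ e1 ∧ g ≠ e2}}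
    (hHends : ∀ g, Sym2.map Subtype.val (H.ends g) = G.ends g.val)
    {K1 K2 : Set {g : Fin m // g ≠ e ∧ g ≠ e1 ∧ g ≠ e2}}
    (hKuniv : K1 ∪ K2 = Set.univ) (hKdisj : Disjoint K1 K2)
    (hKbal : H.Balanced c K1 K2)
    (hKt1 : H.IsSpanningTree ({g | g.val ∈ A} ∩ K1))
    (hKt2 : H.IsSpanningTree ({g | g.val ∈ A} ∩ K2))
    (hD : (H.deg K1 ⟨v, hvu⟩ : ℤ) ≤ H.deg K2 ⟨v, hvu⟩) :
    G.GoodDecomp c A := by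
  classical
  have hι : Function.Injective (Subtype.val : {y : Fin n // y ≠ u} → Fin n) :=
    Subtype.val_injective
  have hp : Function.Injective
      (Subtype.val : {g : Fin m // g ≠ e ∧ g ≠ e1 ∧ g ≠ e2} → Fin m) :=
    Subtype.val_injective
  have hk : Function.Injective
      (id : {g : Fin m // g ≠ e ∧ g ≠ e1 ∧ g ≠ e2} →
        {g : Fin m // g ≠ e ∧ g ≠ e1 ∧ g ≠ e2}) := fun _ _ h => h
  have hcomp : ∀ g : {g : Fin m // g ≠ e ∧ g ≠ e1 ∧ g ≠ e2},
      Sym2.map (Subtype.val : {y : Fin n // y ≠ u} → Fin n) (H.ends (id g)) =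
      G.ends (Subtype.val g) := hHends
  have hnu : ∀ y' : {y : Fin n // y ≠ u}, (Subtype.val y') ≠ u := fun y' => y'.prop
  have hsurj : ∀ y, y ≠ u → ∃ y' : {y : Fin n // y ≠ u}, Subtype.val y' = y :=
    fun y hy => ⟨⟨y, hy⟩, rfl⟩
  have huv : u ≠ v := ends_ne hE1
  have huw : u ≠ w := ends_ne hE2
  have hvx : v ≠ x := ends_ne hEe
  have hux : u ≠ x := fun h => hue (by rw [hEe, h]; exact Sym2.mem_mk_right _ _)
  have hee1 : e ≠ e1 := fun h => (h ▸ hue) (by rw [hE1]; exact Sym2.mem_mk_left _ _)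
  have hee2 : e ≠ e2 := fun h => (h ▸ hue) (by rw [hE2]; exact Sym2.mem_mk_left _ _)
  -- the two sides of the lifted decomposition
  refine ⟨(Subtype.val '' K1) ∪ {e, e1}, (Subtype.val '' K2) ∪ {e2}, ?_, ?_, ?_, ?_, ?_⟩
  · -- union is everything
    ext g
    simp only [Set.mem_union, Set.mem_image, Set.mem_insert_iff,
      Set.mem_singleton_iff, Set.mem_univ, iff_true]
    by_cases hg : g = e ∨ g = e1 ∨ g = e2
    · tauto
    · push_neg at hg
      have : (⟨g, hg.1, hg.2.1, hg.2.2⟩ :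
          {g : Fin m // g ≠ e ∧ g ≠ e1 ∧ g ≠ e2}) ∈ K1 ∪ K2 := by
        rw [hKuniv]; trivial
      rcases this with h | h
      · exact Or.inl (Or.inl ⟨_, h, rfl⟩)
      · exact Or.inr (Or.inl ⟨_, h, rfl⟩)
  · -- disjointness
    rw [Set.disjoint_left]
    rintro g (⟨g₀, hg₀, rfl⟩ | hg) hg2
    · rcases hg2 with ⟨g₁, hg₁, hval⟩ | hg2
      · exact (Set.disjoint_left.mp hKdisj hg₀) (hp hval ▸ hg₁)
      · exact g₀.prop.2.2 (Set.mem_singleton_iff.mp hg2)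
    · rcases Set.mem_insert_iff.mp hg with rfl | hg'
      · rcases hg2 with ⟨g₁, -, hval⟩ | hg2
        · exact g₁.prop.1 hval
        · exact hee2 (Set.mem_singleton_iff.mp hg2)
      · rcases Set.mem_singleton_iff.mp hg' with rfl
        rcases hg2 with ⟨g₁, -, hval⟩ | hg2
        · exact g₁.prop.2.1 hval
        · exact he12 (Set.mem_singleton_iff.mp hg2)
  · -- balancedness
    have hdj1 : Disjoint (Subtype.val '' K1) ({e, e1} : Set (Fin m)) := by
      rw [Set.disjoint_right]
      rintro g hg ⟨g₀, -, rfl⟩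
      rcases Set.mem_insert_iff.mp hg with h | h
      · exact g₀.prop.1 h
      · exact g₀.prop.2.1 (Set.mem_singleton_iff.mp h)
    have hdj2 : Disjoint (Subtype.val '' K2) ({e2} : Set (Fin m)) := by
      rw [Set.disjoint_right]
      rintro g hg ⟨g₀, -, rfl⟩
      exact g₀.prop.2.2 (Set.mem_singleton_iff.mp hg)
    have hdjee1 : Disjoint ({e} : Set (Fin m)) ({e1} : Set (Fin m)) := by
      simp [Set.disjoint_singleton_left, hee1]
    have hsplit1 : ∀ y : Fin n, G.deg (Subtype.val '' K1 ∪ {e, e1}) y =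
        G.deg (Subtype.val '' K1) y + (G.deg {e} y + G.deg {e1} y) := by
      intro y
      rw [deg_union _ _ _ hdj1 (Set.toFinite _) (Set.toFinite _),
        Set.insert_eq, deg_union _ _ _ hdjee1 (Set.toFinite _) (Set.toFinite _)]
    have hsplit2 : ∀ y : Fin n, G.deg (Subtype.val '' K2 ∪ {e2}) y =
        G.deg (Subtype.val '' K2) y + G.deg {e2} y := by
      intro y
      rw [deg_union _ _ _ hdj2 (Set.toFinite _) (Set.toFinite _)]
    intro y
    by_cases hyu : y = u
    · subst hyu
      rw [hsplit1, hsplit2, deg_at_u hpu K1, deg_at_u hpu K2,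
        deg_singleton, deg_singleton, deg_singleton, if_neg hue,
        if_pos (by rw [hE1]; exact Sym2.mem_mk_left _ _),
        if_pos (by rw [hE2]; exact Sym2.mem_mk_left _ _)]
      rw [abs_le]
      omega
    · have hy' : (Subtype.val (⟨y, hyu⟩ : {y : Fin n // y ≠ u})) = y := rfl
      have hd1 : G.deg (Subtype.val '' K1) y = H.deg K1 ⟨y, hyu⟩ := by
        have h := deg_transfer hι hp hk hcomp K1 ⟨y, hyu⟩
        rwa [hy', Set.image_id] at h
      have hd2 : G.deg (Subtype.val '' K2) y = H.deg K2 ⟨y, hyu⟩ := by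
        have h := deg_transfer hι hp hk hcomp K2 ⟨y, hyu⟩
        rwa [hy', Set.image_id] at h
      have hb := hKbal ⟨y, hyu⟩
      rw [abs_le] at hb
      rw [hsplit1, hsplit2, hd1, hd2]
      simp only [deg_singleton, hEe, hE1, hE2, Sym2.mem_iff]
      rw [abs_le]
      by_cases hyv : y = v
      · have hmk : (⟨y, hyu⟩ : {t : Fin n // t ≠ u}) = ⟨v, hvu⟩ := Subtype.ext hyv
        have hD' : (H.deg K1 ⟨y, hyu⟩ : ℤ) ≤ H.deg K2 ⟨y, hyu⟩ := by
          rw [hmk]; exact hD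
        rw [if_pos (show y = v ∨ y = x from Or.inl hyv),
          if_pos (show y = u ∨ y = v from Or.inr hyv),
          if_neg (show ¬(y = u ∨ y = w) from by
            push_neg
            exact ⟨hyu, fun h => hvx (hyv ▸ hwx ▸ h)⟩)]
        push_cast
        omega
      · rw [if_neg (show ¬(y = u ∨ y = v) from by push_neg; exact ⟨hyu, hyv⟩)]
        by_cases hyx : y = x
        · rw [if_pos (show y = v ∨ y = x from Or.inr hyx),
            if_pos (show y = u ∨ y = w from Or.inr (hyx.trans hwx.symm))]
          push_cast
          omega
        · rw [if_neg (show ¬(y = v ∨ y = x) from by push_neg; exact ⟨hyv, hyx⟩),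
            if_neg (show ¬(y = u ∨ y = w) from by
              push_neg
              exact ⟨hyu, fun h => hyx (h.trans hwx)⟩)]
          push_cast
          omega
  · -- first tree
    have hset1 : A ∩ (Subtype.val '' K1 ∪ {e, e1}) =
        (Subtype.val '' ({g | (g : Fin m) ∈ A} ∩ K1)) ∪ {e1} := by
      ext g
      simp only [Set.mem_inter_iff, Set.mem_union, Set.mem_image,
        Set.mem_insert_iff, Set.mem_singleton_iff, Set.mem_setOf_eq]
      constructor
      · rintro ⟨hgA, ⟨g₀, hg₀, rfl⟩ | rfl | rfl⟩
        · exact Or.inl ⟨g₀, ⟨hgA, hg₀⟩, rfl⟩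
        · exact absurd hgA heA
        · exact Or.inr rfl
      · rintro (⟨g₀, ⟨hgA, hg₀⟩, rfl⟩ | rfl)
        · exact ⟨hgA, Or.inl ⟨g₀, hg₀, rfl⟩⟩
        · exact ⟨he1A, Or.inr (Or.inr rfl)⟩
    rw [hset1]
    exact treeUp hι hp hk hcomp hnu hsurj hpu
      (by rw [Set.image_id]; exact hKt1) hE1 (fun g => g.prop.2.1)
  · -- second tree
    have hset2 : A ∩ (Subtype.val '' K2 ∪ {e2}) =
        (Subtype.val '' ({g | (g : Fin m) ∈ A} ∩ K2)) ∪ {e2} := by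
      ext g
      simp only [Set.mem_inter_iff, Set.mem_union, Set.mem_image,
        Set.mem_singleton_iff, Set.mem_setOf_eq]
      constructor
      · rintro ⟨hgA, ⟨g₀, hg₀, rfl⟩ | rfl⟩
        · exact Or.inl ⟨g₀, ⟨hgA, hg₀⟩, rfl⟩
        · exact Or.inr rfl
      · rintro (⟨g₀, ⟨hgA, hg₀⟩, rfl⟩ | rfl)
        · exact ⟨hgA, Or.inl ⟨g₀, hg₀, rfl⟩⟩
        · exact ⟨he2A, Or.inr rfl⟩
    rw [hset2]
    exact treeUp hι hp hk hcomp hnu hsurj hpu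
      (by rw [Set.image_id]; exact hKt2) hE2 (fun g => g.prop.2.2)

end Lift

end Multigraph
namespace Multigraph

set_option linter.unusedSectionVars false
set_option maxHeartbeats 1000000

section LiftA

variable {n m : ℕ}

/-- Case `w ≠ x`: lifting a good decomposition of the reduced graph `H`
(obtained from `G` by deleting `u`, `e`, `e1`, `e2` and adding a fresh edge
`f = wx`) back to `G`, in the case `f ∈ K1`. -/
lemma caseA_lift {c : ℕ} (hc : 2 ≤ c)
    {G : Multigraph (Fin n) (Fin m)} {A : Set (Fin m)}
    {u v w x : Fin n} {e e1 e2 : Fin m}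
    (hvu : v ≠ u) (hwu : w ≠ u) (hxu : x ≠ u)
    (hE1 : G.ends e1 = s(u, v)) (hE2 : G.ends e2 = s(u, w))
    (hEe : G.ends e = s(v, x)) (hwx : w ≠ x)
    (hue : u ∉ G.ends e) (he12 : e1 ≠ e2)
    (he1A : e1 ∈ A) (he2A : e2 ∈ A) (heA : e ∉ A)
    (hpu : ∀ g : {g : Fin m // g ≠ e ∧ g ≠ e1 ∧ g ≠ e2}, u ∉ G.ends g.val)
    {H : Multigraph {y : Fin n // y ≠ u}
      ({g : Fin m // g ≠ e ∧ g ≠ e1 ∧ g ≠ e2} ⊕ Unit)}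
    (hHends : ∀ g, Sym2.map Subtype.val (H.ends (Sum.inl g)) = G.ends g.val)
    (hHf : H.ends (Sum.inr ()) = s(⟨w, hwu⟩, ⟨x, hxu⟩))
    {K1 K2 : Set ({g : Fin m // g ≠ e ∧ g ≠ e1 ∧ g ≠ e2} ⊕ Unit)}
    (hKuniv : K1 ∪ K2 = Set.univ) (hKdisj : Disjoint K1 K2)
    (hKbal : H.Balanced c K1 K2)
    (hKt1 : H.IsSpanningTree ((Sum.inl '' {g | g.val ∈ A}) ∩ K1))
    (hKt2 : H.IsSpanningTree ((Sum.inl '' {g | g.val ∈ A}) ∩ K2))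
    (hf : Sum.inr () ∈ K1) :
    G.GoodDecomp c A := by
  classical
  have hι : Function.Injective (Subtype.val : {y : Fin n // y ≠ u} → Fin n) :=
    Subtype.val_injective
  have hp : Function.Injective
      (Subtype.val : {g : Fin m // g ≠ e ∧ g ≠ e1 ∧ g ≠ e2} → Fin m) :=
    Subtype.val_injective
  have hk : Function.Injective
      (Sum.inl : {g : Fin m // g ≠ e ∧ g ≠ e1 ∧ g ≠ e2} →
        {g : Fin m // g ≠ e ∧ g ≠ e1 ∧ g ≠ e2} ⊕ Unit) := Sum.inl_injective
  have hcomp : ∀ g : {g : Fin m // g ≠ e ∧ g ≠ e1 ∧ g ≠ e2},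
      Sym2.map (Subtype.val : {y : Fin n // y ≠ u} → Fin n) (H.ends (Sum.inl g)) =
      G.ends (Subtype.val g) := hHends
  have hnu : ∀ y' : {y : Fin n // y ≠ u}, (Subtype.val y') ≠ u := fun y' => y'.prop
  have hsurj : ∀ y, y ≠ u → ∃ y' : {y : Fin n // y ≠ u}, Subtype.val y' = y :=
    fun y hy => ⟨⟨y, hy⟩, rfl⟩
  have huv : u ≠ v := ends_ne hE1
  have huw : u ≠ w := ends_ne hE2
  have hvx : v ≠ x := ends_ne hEe
  have hux : u ≠ x := fun h => hue (by rw [hEe, h]; exact Sym2.mem_mk_right _ _)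
  have hee1 : e ≠ e1 := fun h => (h ▸ hue) (by rw [hE1]; exact Sym2.mem_mk_left _ _)
  have hee2 : e ≠ e2 := fun h => (h ▸ hue) (by rw [hE2]; exact Sym2.mem_mk_left _ _)
  have hfK2 : Sum.inr () ∉ K2 := fun h => Set.disjoint_left.mp hKdisj hf h
  -- the sets of old edges on each side
  have hK2eq : Sum.inl '' (Sum.inl ⁻¹' K2) = K2 := by
    ext g'
    rcases g' with g | b
    · simp [Set.mem_image, Set.mem_preimage]
    · rcases b with ⟨⟩
      simp only [Set.mem_image, Set.mem_preimage]
      constructor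
      · rintro ⟨g₀, -, h⟩; exact absurd h (by simp)
      · intro h; exact absurd h hfK2
  have hK1eq : K1 = (Sum.inl '' (Sum.inl ⁻¹' K1)) ∪ {Sum.inr ()} := by
    ext g'
    rcases g' with g | b
    · simp [Set.mem_image, Set.mem_preimage]
    · rcases b with ⟨⟩
      simp [hf]
  have hdjf : Disjoint (Sum.inl '' (Sum.inl ⁻¹' K1)) ({Sum.inr ()} :
      Set ({g : Fin m // g ≠ e ∧ g ≠ e1 ∧ g ≠ e2} ⊕ Unit)) := by
    rw [Set.disjoint_right]
    rintro g' hg' ⟨g₀, -, rfl⟩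
    simp at hg'
  -- the two sides of the lifted decomposition
  refine ⟨(Subtype.val '' (Sum.inl ⁻¹' K1)) ∪ {e, e2},
    (Subtype.val '' (Sum.inl ⁻¹' K2)) ∪ {e1}, ?_, ?_, ?_, ?_, ?_⟩
  · -- union is everything
    ext g
    simp only [Set.mem_union, Set.mem_image, Set.mem_insert_iff,
      Set.mem_singleton_iff, Set.mem_univ, iff_true, Set.mem_preimage]
    by_cases hg : g = e ∨ g = e1 ∨ g = e2
    · tauto
    · push_neg at hg
      have : Sum.inl (⟨g, hg.1, hg.2.1, hg.2.2⟩ :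
          {g : Fin m // g ≠ e ∧ g ≠ e1 ∧ g ≠ e2}) ∈ K1 ∪ K2 := by
        rw [hKuniv]; trivial
      rcases this with h | h
      · exact Or.inl (Or.inl ⟨_, h, rfl⟩)
      · exact Or.inr (Or.inl ⟨_, h, rfl⟩)
  · -- disjointness
    rw [Set.disjoint_left]
    rintro g (⟨g₀, hg₀, rfl⟩ | hg) hg2
    · rcases hg2 with ⟨g₁, hg₁, hval⟩ | hg2
      · have : g₁ = g₀ := hp hval
        subst this
        exact absurd hg₀ (fun h => Set.disjoint_left.mp hKdisj h hg₁)
      · exact g₀.prop.2.1 (Set.mem_singleton_iff.mp hg2)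
    · rcases Set.mem_insert_iff.mp hg with rfl | hg'
      · rcases hg2 with ⟨g₁, -, hval⟩ | hg2
        · exact g₁.prop.1 hval
        · exact hee1 (Set.mem_singleton_iff.mp hg2)
      · rcases Set.mem_singleton_iff.mp hg' with rfl
        rcases hg2 with ⟨g₁, -, hval⟩ | hg2
        · exact g₁.prop.2.2 hval
        · exact he12 (Set.mem_singleton_iff.mp hg2).symm
  · -- balancedness
    have hdj1 : Disjoint (Subtype.val '' (Sum.inl ⁻¹' K1)) ({e, e2} : Set (Fin m)) := by
      rw [Set.disjoint_right]
      rintro g hg ⟨g₀, -, rfl⟩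
      rcases Set.mem_insert_iff.mp hg with h | h
      · exact g₀.prop.1 h
      · exact g₀.prop.2.2 (Set.mem_singleton_iff.mp h)
    have hdj2 : Disjoint (Subtype.val '' (Sum.inl ⁻¹' K2)) ({e1} : Set (Fin m)) := by
      rw [Set.disjoint_right]
      rintro g hg ⟨g₀, -, rfl⟩
      exact g₀.prop.2.1 (Set.mem_singleton_iff.mp hg)
    have hdjee2 : Disjoint ({e} : Set (Fin m)) ({e2} : Set (Fin m)) := by
      simp [Set.disjoint_singleton_left, hee2]
    have hsplit1 : ∀ y : Fin n, G.deg (Subtype.val '' (Sum.inl ⁻¹' K1) ∪ {e, e2}) y =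
        G.deg (Subtype.val '' (Sum.inl ⁻¹' K1)) y + (G.deg {e} y + G.deg {e2} y) := by
      intro y
      rw [deg_union _ _ _ hdj1 (Set.toFinite _) (Set.toFinite _),
        Set.insert_eq, deg_union _ _ _ hdjee2 (Set.toFinite _) (Set.toFinite _)]
    have hsplit2 : ∀ y : Fin n, G.deg (Subtype.val '' (Sum.inl ⁻¹' K2) ∪ {e1}) y =
        G.deg (Subtype.val '' (Sum.inl ⁻¹' K2)) y + G.deg {e1} y := by
      intro y
      rw [deg_union _ _ _ hdj2 (Set.toFinite _) (Set.toFinite _)]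
    intro y
    by_cases hyu : y = u
    · subst hyu
      rw [hsplit1, hsplit2, deg_at_u hpu (Sum.inl ⁻¹' K1), deg_at_u hpu (Sum.inl ⁻¹' K2),
        deg_singleton, deg_singleton, deg_singleton, if_neg hue,
        if_pos (by rw [hE2]; exact Sym2.mem_mk_left _ _),
        if_pos (by rw [hE1]; exact Sym2.mem_mk_left _ _)]
      rw [abs_le]
      omega
    · -- transfer the degrees of the old parts
      have hd1 : G.deg (Subtype.val '' (Sum.inl ⁻¹' K1)) y =
          H.deg (Sum.inl '' (Sum.inl ⁻¹' K1)) ⟨y, hyu⟩ :=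
        deg_transfer hι hp hk hcomp (Sum.inl ⁻¹' K1) ⟨y, hyu⟩
      have hd2 : G.deg (Subtype.val '' (Sum.inl ⁻¹' K2)) y = H.deg K2 ⟨y, hyu⟩ := by
        have h := deg_transfer hι hp hk hcomp (Sum.inl ⁻¹' K2) ⟨y, hyu⟩
        rwa [hK2eq] at h
      -- the degree of f
      have hχf : H.deg {Sum.inr ()} (⟨y, hyu⟩ : {t : Fin n // t ≠ u}) =
          if y = w ∨ y = x then 1 else 0 := by
        simp only [deg_singleton, hHf, Sym2.mem_iff, Subtype.mk.injEq]
      have hK1split : H.deg K1 ⟨y, hyu⟩ =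
          H.deg (Sum.inl '' (Sum.inl ⁻¹' K1)) ⟨y, hyu⟩ +
            (if y = w ∨ y = x then 1 else 0) := by
        rw [← hχf]
        nth_rewrite 1 [hK1eq]
        exact deg_union _ _ _ hdjf (Set.toFinite _) (Set.toFinite _)
      have hb := hKbal ⟨y, hyu⟩
      rw [abs_le] at hb
      rw [hsplit1, hsplit2, hd1, hd2]
      have hdd : H.deg (Sum.inl '' (Sum.inl ⁻¹' K1)) ⟨y, hyu⟩ +
          (if y = w ∨ y = x then 1 else 0) = H.deg K1 ⟨y, hyu⟩ := hK1split.symm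
      simp only [deg_singleton, hEe, hE1, hE2, Sym2.mem_iff]
      rw [abs_le]
      by_cases hyv : y = v <;> by_cases hyw : y = w <;> by_cases hyx : y = x
      · exact absurd (hyw.symm.trans hyx) hwx
      · rw [if_pos (show y = w ∨ y = x from Or.inl hyw)] at hdd
        rw [if_pos (show y = v ∨ y = x from Or.inl hyv),
          if_pos (show y = u ∨ y = w from Or.inr hyw),
          if_pos (show y = u ∨ y = v from Or.inr hyv)]
        push_cast
        omega
      · exact absurd (hyv.symm.trans hyx) hvx
      · rw [if_neg (show ¬(y = w ∨ y = x) from by push_neg; exact ⟨hyw, hyx⟩)] at hdd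
        rw [if_pos (show y = v ∨ y = x from Or.inl hyv),
          if_neg (show ¬(y = u ∨ y = w) from by push_neg; exact ⟨hyu, hyw⟩),
          if_pos (show y = u ∨ y = v from Or.inr hyv)]
        push_cast
        omega
      · exact absurd (hyw.symm.trans hyx) hwx
      · rw [if_pos (show y = w ∨ y = x from Or.inl hyw)] at hdd
        rw [if_neg (show ¬(y = v ∨ y = x) from by push_neg; exact ⟨hyv, hyx⟩),
          if_pos (show y = u ∨ y = w from Or.inr hyw),
          if_neg (show ¬(y = u ∨ y = v) from by push_neg; exact ⟨hyu, hyv⟩)]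
        push_cast
        omega
      · rw [if_pos (show y = w ∨ y = x from Or.inr hyx)] at hdd
        rw [if_pos (show y = v ∨ y = x from Or.inr hyx),
          if_neg (show ¬(y = u ∨ y = w) from by push_neg; exact ⟨hyu, hyw⟩),
          if_neg (show ¬(y = u ∨ y = v) from by push_neg; exact ⟨hyu, hyv⟩)]
        push_cast
        omega
      · rw [if_neg (show ¬(y = w ∨ y = x) from by push_neg; exact ⟨hyw, hyx⟩)] at hdd
        rw [if_neg (show ¬(y = v ∨ y = x) from by push_neg; exact ⟨hyv, hyx⟩),
          if_neg (show ¬(y = u ∨ y = w) from by push_neg; exact ⟨hyu, hyw⟩),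
          if_neg (show ¬(y = u ∨ y = v) from by push_neg; exact ⟨hyu, hyv⟩)]
        push_cast
        omega
  · -- first tree
    have hset1 : (Sum.inl '' {g : {g : Fin m // g ≠ e ∧ g ≠ e1 ∧ g ≠ e2} |
        g.val ∈ A ∧ Sum.inl g ∈ K1}) = (Sum.inl '' {g | g.val ∈ A}) ∩ K1 := by
      ext g'
      simp only [Set.mem_image, Set.mem_inter_iff, Set.mem_setOf_eq]
      constructor
      · rintro ⟨g₀, ⟨hA, hK⟩, rfl⟩
        exact ⟨⟨g₀, hA, rfl⟩, hK⟩
      · rintro ⟨⟨g₀, hA, rfl⟩, hK⟩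
        exact ⟨g₀, ⟨hA, hK⟩, rfl⟩
    have hset1' : A ∩ (Subtype.val '' (Sum.inl ⁻¹' K1) ∪ {e, e2}) =
        (Subtype.val '' {g : {g : Fin m // g ≠ e ∧ g ≠ e1 ∧ g ≠ e2} |
          g.val ∈ A ∧ Sum.inl g ∈ K1}) ∪ {e2} := by
      ext g
      simp only [Set.mem_inter_iff, Set.mem_union, Set.mem_image,
        Set.mem_insert_iff, Set.mem_singleton_iff, Set.mem_setOf_eq,
        Set.mem_preimage]
      constructor
      · rintro ⟨hgA, ⟨g₀, hg₀, rfl⟩ | rfl | rfl⟩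
        · exact Or.inl ⟨g₀, ⟨hgA, hg₀⟩, rfl⟩
        · exact absurd hgA heA
        · exact Or.inr rfl
      · rintro (⟨g₀, ⟨hgA, hg₀⟩, rfl⟩ | rfl)
        · exact ⟨hgA, Or.inl ⟨g₀, hg₀, rfl⟩⟩
        · exact ⟨he2A, Or.inr (Or.inr rfl)⟩
    rw [hset1']
    exact treeUp hι hp hk hcomp hnu hsurj hpu
      (by rw [hset1]; exact hKt1) hE2 (fun g => g.prop.2.2)
  · -- second tree
    have hset2 : (Sum.inl '' {g : {g : Fin m // g ≠ e ∧ g ≠ e1 ∧ g ≠ e2} |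
        g.val ∈ A ∧ Sum.inl g ∈ K2}) = (Sum.inl '' {g | g.val ∈ A}) ∩ K2 := by
      ext g'
      simp only [Set.mem_image, Set.mem_inter_iff, Set.mem_setOf_eq]
      constructor
      · rintro ⟨g₀, ⟨hA, hK⟩, rfl⟩
        exact ⟨⟨g₀, hA, rfl⟩, hK⟩
      · rintro ⟨⟨g₀, hA, rfl⟩, hK⟩
        exact ⟨g₀, ⟨hA, hK⟩, rfl⟩
    have hset2' : A ∩ (Subtype.val '' (Sum.inl ⁻¹' K2) ∪ {e1}) =
        (Subtype.val '' {g : {g : Fin m // g ≠ e ∧ g ≠ e1 ∧ g ≠ e2} |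
          g.val ∈ A ∧ Sum.inl g ∈ K2}) ∪ {e1} := by
      ext g
      simp only [Set.mem_inter_iff, Set.mem_union, Set.mem_image,
        Set.mem_singleton_iff, Set.mem_setOf_eq, Set.mem_preimage]
      constructor
      · rintro ⟨hgA, ⟨g₀, hg₀, rfl⟩ | rfl⟩
        · exact Or.inl ⟨g₀, ⟨hgA, hg₀⟩, rfl⟩
        · exact Or.inr rfl
      · rintro (⟨g₀, ⟨hgA, hg₀⟩, rfl⟩ | rfl)
        · exact ⟨hgA, Or.inl ⟨g₀, hg₀, rfl⟩⟩
        · exact ⟨he1A, Or.inr rfl⟩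
    rw [hset2']
    exact treeUp hι hp hk hcomp hnu hsurj hpu
      (by rw [hset2]; exact hKt2) hE1 (fun g => g.prop.2.1)

end LiftA

end Multigraph
namespace Multigraph

set_option linter.unusedSectionVars false
set_option maxHeartbeats 1000000

section Prj

variable {n : ℕ}

/-- Projection of `Fin n` onto the subtype avoiding `u` (sending `u` to a
dummy vertex). -/
noncomputable def prj (u : Fin n) {v : Fin n} (hvu : v ≠ u) :
    Fin n → {y : Fin n // y ≠ u} :=
  fun y => if hy : y ≠ u then ⟨y, hy⟩ else ⟨v, hvu⟩

lemma prj_val {u v : Fin n} (hvu : v ≠ u) {y : Fin n} (hy : y ≠ u) :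
    prj u hvu y = ⟨y, hy⟩ := dif_pos hy

lemma prj_map {u v : Fin n} (hvu : v ≠ u) {z : Sym2 (Fin n)} (hz : u ∉ z) :
    Sym2.map Subtype.val (Sym2.map (prj u hvu) z) = z := by
  induction z using Sym2.ind with
  | _ a b =>
    have ha : a ≠ u := fun h => hz (h ▸ Sym2.mem_mk_left a b)
    have hb : b ≠ u := fun h => hz (h ▸ Sym2.mem_mk_right a b)
    rw [Sym2.map_pair_eq, Sym2.map_pair_eq, prj_val hvu ha, prj_val hvu hb]

lemma prj_nodiag {u v : Fin n} (hvu : v ≠ u) {z : Sym2 (Fin n)} (hz : u ∉ z)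
    (hnd : ¬z.IsDiag) : ¬(Sym2.map (prj u hvu) z).IsDiag := by
  induction z using Sym2.ind with
  | _ a b =>
    have ha : a ≠ u := fun h => hz (h ▸ Sym2.mem_mk_left a b)
    have hb : b ≠ u := fun h => hz (h ▸ Sym2.mem_mk_right a b)
    rw [Sym2.map_pair_eq, Sym2.mk_isDiag_iff, prj_val hvu ha, prj_val hvu hb]
    rw [Sym2.mk_isDiag_iff] at hnd
    intro h
    exact hnd (congrArg Subtype.val h)

end Prj

section MainCore

/-- The heart of the argument: a minimal counterexample admits no vertex `u`
of degree 2 (with tree edges `e1 = uv`, `e2 = uw`) whose neighbour `v` is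
incident with an `M`-edge `e = vx`. -/
lemma main_core (c : ℕ) (hc : 2 ≤ c) (n m : ℕ)
    (G : Multigraph (Fin n) (Fin m)) (A M : Set (Fin m))
    (huniv : A ∪ M = Set.univ) (hdisjAM : Disjoint A M)
    (hnogood : ¬ G.GoodDecomp c A)
    (hmin : ∀ (n' m' : ℕ) (G' : Multigraph (Fin n') (Fin m'))
      (A' M' : Set (Fin m')), G'.AMCounterexample c A' M' →
      M.ncard ≤ M'.ncard ∧ (M.ncard = M'.ncard → n ≤ n'))
    (T1 T2 : Set (Fin m)) (hT12 : T1 ∪ T2 = A) (hTd : Disjoint T1 T2)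
    (hT1 : G.IsSpanningTree T1) (hT2 : G.IsSpanningTree T2)
    (u v w x : Fin n) (e e1 e2 : Fin m)
    (he1T : e1 ∈ T1) (he2T : e2 ∈ T2)
    (hE1 : G.ends e1 = s(u, v)) (hE2 : G.ends e2 = s(u, w))
    (heM : e ∈ M) (hEe : G.ends e = s(v, x))
    (huniqU : ∀ g : Fin m, u ∈ G.ends g → g = e1 ∨ g = e2) : False := by
  classical
  have huv : u ≠ v := ends_ne hE1
  have huw : u ≠ w := ends_ne hE2
  have hvx : v ≠ x := ends_ne hEe
  have hvu : v ≠ u := huv.symm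
  have hwu : w ≠ u := huw.symm
  have he1A : e1 ∈ A := by rw [← hT12]; exact Or.inl he1T
  have he2A : e2 ∈ A := by rw [← hT12]; exact Or.inr he2T
  have he_nA : e ∉ A := fun h => Set.disjoint_left.mp hdisjAM h heM
  have hue : u ∉ G.ends e := by
    intro h
    rcases huniqU e h with rfl | rfl
    · exact he_nA he1A
    · exact he_nA he2A
  have hxu : x ≠ u := fun h => hue (by rw [hEe, ← h]; exact Sym2.mem_mk_right _ _)
  have hee1 : e ≠ e1 := fun h => he_nA (h ▸ he1A)
  have hee2 : e ≠ e2 := fun h => he_nA (h ▸ he2A)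
  have he12 : e1 ≠ e2 := fun h => Set.disjoint_left.mp hTd he1T (h ▸ he2T)
  have hpu : ∀ g : {g : Fin m // g ≠ e ∧ g ≠ e1 ∧ g ≠ e2}, u ∉ G.ends g.val := by
    rintro g hg
    rcases huniqU g.val hg with h | h
    · exact g.prop.2.1 h
    · exact g.prop.2.2 h
  have huniqT1 : ∀ g ∈ T1, u ∈ G.ends g → g = e1 := by
    intro g hgT hg
    rcases huniqU g hg with rfl | rfl
    · rfl
    · exact absurd hgT (fun h => Set.disjoint_left.mp hTd h he2T)
  have huniqT2 : ∀ g ∈ T2, u ∈ G.ends g → g = e2 := by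
    intro g hgT hg
    rcases huniqU g hg with rfl | rfl
    · exact absurd he1T (fun h => Set.disjoint_left.mp hTd h hgT)
    · rfl
  have hι : Function.Injective (Subtype.val : {y : Fin n // y ≠ u} → Fin n) :=
    Subtype.val_injective
  have hp : Function.Injective
      (Subtype.val : {g : Fin m // g ≠ e ∧ g ≠ e1 ∧ g ≠ e2} → Fin m) :=
    Subtype.val_injective
  have hnu : ∀ y' : {y : Fin n // y ≠ u}, (Subtype.val y') ≠ u := fun y' => y'.prop
  have hsurj : ∀ y, y ≠ u → ∃ y' : {y : Fin n // y ≠ u}, Subtype.val y' = y :=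
    fun y hy => ⟨⟨y, hy⟩, rfl⟩
  -- the edge sets of the two trees, of `A` and of `M`, pulled to the subtype
  have hT1img : Subtype.val '' {g : {g : Fin m // g ≠ e ∧ g ≠ e1 ∧ g ≠ e2} |
      g.val ∈ T1} = T1 \ {e1} := by
    ext g
    simp only [Set.mem_image, Set.mem_setOf_eq, Set.mem_diff,
      Set.mem_singleton_iff]
    constructor
    · rintro ⟨g₀, hg₀, rfl⟩
      exact ⟨hg₀, g₀.prop.2.1⟩
    · rintro ⟨hgT, hge1⟩
      have hgA : g ∈ A := by rw [← hT12]; exact Or.inl hgT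
      refine ⟨⟨g, fun h => he_nA (h ▸ hgA), hge1, fun h =>
        Set.disjoint_left.mp hTd hgT (h ▸ he2T)⟩, hgT, rfl⟩
  have hT2img : Subtype.val '' {g : {g : Fin m // g ≠ e ∧ g ≠ e1 ∧ g ≠ e2} |
      g.val ∈ T2} = T2 \ {e2} := by
    ext g
    simp only [Set.mem_image, Set.mem_setOf_eq, Set.mem_diff,
      Set.mem_singleton_iff]
    constructor
    · rintro ⟨g₀, hg₀, rfl⟩
      exact ⟨hg₀, g₀.prop.2.2⟩
    · rintro ⟨hgT, hge2⟩
      have hgA : g ∈ A := by rw [← hT12]; exact Or.inr hgT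
      refine ⟨⟨g, fun h => he_nA (h ▸ hgA), fun h =>
        Set.disjoint_left.mp hTd (h ▸ he1T) hgT, hge2⟩, hgT, rfl⟩
  have hMimg : Subtype.val '' {g : {g : Fin m // g ≠ e ∧ g ≠ e1 ∧ g ≠ e2} |
      g.val ∈ M} = M \ {e} := by
    ext g
    simp only [Set.mem_image, Set.mem_setOf_eq, Set.mem_diff,
      Set.mem_singleton_iff]
    constructor
    · rintro ⟨g₀, hg₀, rfl⟩
      exact ⟨hg₀, g₀.prop.1⟩
    · rintro ⟨hgM, hge⟩
      refine ⟨⟨g, hge, fun h => Set.disjoint_left.mp hdisjAM he1A (h ▸ hgM),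
        fun h => Set.disjoint_left.mp hdisjAM he2A (h ▸ hgM)⟩, hgM, rfl⟩
  have hMcard : ({g : {g : Fin m // g ≠ e ∧ g ≠ e1 ∧ g ≠ e2} |
      g.val ∈ M}).ncard = M.ncard - 1 := by
    rw [← Set.ncard_image_of_injective _ hp, hMimg,
      Set.ncard_diff_singleton_of_mem heM]
  have hMpos : 0 < M.ncard := by
    rw [Set.ncard_pos (Set.toFinite M)]
    exact ⟨e, heM⟩
  have hcardV : Fintype.card {y : Fin n // y ≠ u} = n - 1 := by
    simp [Fintype.card_subtype_compl]
  have hnpos : 0 < n := u.pos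
  by_cases hwx : w = x
  · -- Case `w = x` : delete `u`, `e`, `e1`, `e2`
    let H : Multigraph {y : Fin n // y ≠ u} {g : Fin m // g ≠ e ∧ g ≠ e1 ∧ g ≠ e2} :=
      { ends := fun g => Sym2.map (prj u hvu) (G.ends g.val),
        loopless := fun g => prj_nodiag hvu (hpu g) (G.loopless g.val) }
    have hHends : ∀ g, Sym2.map Subtype.val (H.ends g) = G.ends g.val :=
      fun g => prj_map hvu (hpu g)
    have hk : Function.Injective (id : {g : Fin m // g ≠ e ∧ g ≠ e1 ∧ g ≠ e2} →
        {g : Fin m // g ≠ e ∧ g ≠ e1 ∧ g ≠ e2}) := fun _ _ h => h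
    have hcomp : ∀ g : {g : Fin m // g ≠ e ∧ g ≠ e1 ∧ g ≠ e2},
        Sym2.map (Subtype.val : {y : Fin n // y ≠ u} → Fin n) (H.ends (id g)) =
        G.ends (Subtype.val g) := hHends
    have hT1H : H.IsSpanningTree {g | g.val ∈ T1} := by
      have h := treeDown hι hp hk hcomp hnu hsurj hT1 huniqT1 hE1 hT1img
      rwa [Set.image_id] at h
    have hT2H : H.IsSpanningTree {g | g.val ∈ T2} := by
      have h := treeDown hι hp hk hcomp hnu hsurj hT2 huniqT2 hE2 hT2img
      rwa [Set.image_id] at h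
    by_cases hgd : H.GoodDecomp c {g | g.val ∈ A}
    · -- lift the good decomposition back to `G`
      obtain ⟨K1, K2, hKu, hKd, hKb, hKt1, hKt2⟩ := hgd
      rcases le_total ((H.deg K1 ⟨v, hvu⟩ : ℤ)) ((H.deg K2 ⟨v, hvu⟩ : ℤ)) with hD | hD
      · exact hnogood (caseB_lift hc hvu hE1 hE2 hEe hwx hue he12 he1A he2A he_nA
          hpu hHends hKu hKd hKb hKt1 hKt2 hD)
      · exact hnogood (caseB_lift hc hvu hE1 hE2 hEe hwx hue he12 he1A he2A he_nA
          hpu hHends (by rw [Set.union_comm]; exact hKu) hKd.symm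
          (fun y' => by rw [abs_sub_comm]; exact hKb y') hKt2 hKt1 hD)
    · -- the reduced graph is a counterexample with fewer `M`-edges
      have hcexH : H.AMCounterexample c {g | g.val ∈ A} {g | g.val ∈ M} := by
        refine ⟨?_, ?_, ⟨{g | g.val ∈ T1}, {g | g.val ∈ T2}, ?_, ?_, hT1H, hT2H⟩, hgd⟩
        · ext g
          simp only [Set.mem_union, Set.mem_setOf_eq, Set.mem_univ, iff_true]
          have : g.val ∈ A ∪ M := by rw [huniv]; trivial
          exact this
        · rw [Set.disjoint_left]
          intro g hA hM
          exact Set.disjoint_left.mp hdisjAM hA hM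
        · ext g
          simp only [Set.mem_union, Set.mem_setOf_eq]
          rw [show A = T1 ∪ T2 from hT12.symm]
          rfl
        · rw [Set.disjoint_left]
          intro g hA hM
          exact Set.disjoint_left.mp hTd hA hM
      obtain ⟨h1, -⟩ := hmin (Fintype.card {y : Fin n // y ≠ u})
        (Fintype.card {g : Fin m // g ≠ e ∧ g ≠ e1 ∧ g ≠ e2})
        (H.mapIso (Fintype.equivFin _) (Fintype.equivFin _))
        ((Fintype.equivFin _) '' {g | g.val ∈ A})
        ((Fintype.equivFin _) '' {g | g.val ∈ M})
        (mapIso_counterexample hcexH)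
      rw [Set.ncard_image_of_injective _ (Equiv.injective _), hMcard] at h1
      omega
  · -- Case `w ≠ x` : delete `u`, `e`, `e1`, `e2` and add a fresh edge `f = wx`
    let H : Multigraph {y : Fin n // y ≠ u}
        ({g : Fin m // g ≠ e ∧ g ≠ e1 ∧ g ≠ e2} ⊕ Unit) :=
      { ends := Sum.elim (fun g => Sym2.map (prj u hvu) (G.ends g.val))
          (fun _ => s(⟨w, hwu⟩, ⟨x, hxu⟩)),
        loopless := by
          rintro (g | g)
          · exact prj_nodiag hvu (hpu g) (G.loopless g.val)
          · rw [Sum.elim_inr, Sym2.mk_isDiag_iff]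
            intro h
            exact hwx (congrArg Subtype.val h) }
    have hHends : ∀ g, Sym2.map Subtype.val (H.ends (Sum.inl g)) = G.ends g.val :=
      fun g => prj_map hvu (hpu g)
    have hHf : H.ends (Sum.inr ()) = s(⟨w, hwu⟩, ⟨x, hxu⟩) := rfl
    have hk : Function.Injective (Sum.inl : {g : Fin m // g ≠ e ∧ g ≠ e1 ∧ g ≠ e2} →
        {g : Fin m // g ≠ e ∧ g ≠ e1 ∧ g ≠ e2} ⊕ Unit) := Sum.inl_injective
    have hcomp : ∀ g : {g : Fin m // g ≠ e ∧ g ≠ e1 ∧ g ≠ e2},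
        Sym2.map (Subtype.val : {y : Fin n // y ≠ u} → Fin n) (H.ends (Sum.inl g)) =
        G.ends (Subtype.val g) := hHends
    have hT1H : H.IsSpanningTree (Sum.inl '' {g | g.val ∈ T1}) :=
      treeDown hι hp hk hcomp hnu hsurj hT1 huniqT1 hE1 hT1img
    have hT2H : H.IsSpanningTree (Sum.inl '' {g | g.val ∈ T2}) :=
      treeDown hι hp hk hcomp hnu hsurj hT2 huniqT2 hE2 hT2img
    by_cases hgd : H.GoodDecomp c (Sum.inl '' {g | g.val ∈ A})
    · -- lift the good decomposition back to `G`
      obtain ⟨K1, K2, hKu, hKd, hKb, hKt1, hKt2⟩ := hgd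
      have hfmem : Sum.inr () ∈ K1 ∪ K2 := by rw [hKu]; trivial
      rcases hfmem with hf | hf
      · exact hnogood (caseA_lift hc hvu hwu hxu hE1 hE2 hEe hwx hue he12
          he1A he2A he_nA hpu hHends hHf hKu hKd hKb hKt1 hKt2 hf)
      · exact hnogood (caseA_lift hc hvu hwu hxu hE1 hE2 hEe hwx hue he12
          he1A he2A he_nA hpu hHends hHf (by rw [Set.union_comm]; exact hKu)
          hKd.symm (fun y' => by rw [abs_sub_comm]; exact hKb y') hKt2 hKt1 hf)
    · -- the reduced graph is a counterexample with the same number of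
      -- `M`-edges but fewer vertices
      have hcexH : H.AMCounterexample c (Sum.inl '' {g | g.val ∈ A})
          (Sum.inl '' {g | g.val ∈ M} ∪ {Sum.inr ()}) := by
        refine ⟨?_, ?_, ⟨Sum.inl '' {g | g.val ∈ T1}, Sum.inl '' {g | g.val ∈ T2},
          ?_, ?_, hT1H, hT2H⟩, hgd⟩
        · ext g'
          simp only [Set.mem_union, Set.mem_image, Set.mem_setOf_eq,
            Set.mem_singleton_iff, Set.mem_univ, iff_true]
          rcases g' with g | b
          · have : g.val ∈ A ∪ M := by rw [huniv]; trivial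
            rcases this with h | h
            · exact Or.inl ⟨g, h, rfl⟩
            · exact Or.inr (Or.inl ⟨g, h, rfl⟩)
          · rcases b with ⟨⟩
            exact Or.inr (Or.inr rfl)
        · rw [Set.disjoint_left]
          rintro g' ⟨g₀, hg₀, rfl⟩ (⟨g₁, hg₁, hval⟩ | hg')
          · have : g₁ = g₀ := hk hval
            subst this
            exact Set.disjoint_left.mp hdisjAM hg₀ hg₁
          · exact absurd (Set.mem_singleton_iff.mp hg') (by simp)
        · have hsetT : ({g : {g : Fin m // g ≠ e ∧ g ≠ e1 ∧ g ≠ e2} |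
              g.val ∈ T1} ∪ {g | g.val ∈ T2}) = {g | g.val ∈ A} := by
            ext g
            show g.val ∈ T1 ∨ g.val ∈ T2 ↔ g.val ∈ A
            rw [← hT12]
            rfl
          rw [← Set.image_union, hsetT]
        · rw [Set.disjoint_left]
          rintro g' ⟨g₀, hg₀, rfl⟩ ⟨g₁, hg₁, hval⟩
          have : g₁ = g₀ := hk hval
          subst this
          exact Set.disjoint_left.mp hTd hg₀ hg₁
      have hMHcard : (Sum.inl '' {g : {g : Fin m // g ≠ e ∧ g ≠ e1 ∧ g ≠ e2} |
          g.val ∈ M} ∪ {Sum.inr ()}).ncard = (M.ncard - 1) + 1 := by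
        rw [Set.ncard_union_eq (by
            rw [Set.disjoint_right]
            rintro g' hg' ⟨g₀, -, rfl⟩
            simp at hg') (Set.toFinite _) (Set.toFinite _),
          Set.ncard_image_of_injective _ hk, hMcard, Set.ncard_singleton]
      obtain ⟨h1, h2⟩ := hmin (Fintype.card {y : Fin n // y ≠ u})
        (Fintype.card ({g : Fin m // g ≠ e ∧ g ≠ e1 ∧ g ≠ e2} ⊕ Unit))
        (H.mapIso (Fintype.equivFin _) (Fintype.equivFin _))
        ((Fintype.equivFin _) '' (Sum.inl '' {g | g.val ∈ A}))
        ((Fintype.equivFin _) '' (Sum.inl '' {g | g.val ∈ M} ∪ {Sum.inr ()}))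
        (mapIso_counterexample hcexH)
      rw [Set.ncard_image_of_injective _ (Equiv.injective _), hMHcard] at h1 h2
      have h3 := h2 (by omega)
      rw [hcardV] at h3
      omega

end MainCore

end Multigraph
/-- **Theorem (Statement 15).** Let `G = A + M` be a counterexample (`c ≥ 2`)
with `e(M)` minimal and, subject to this, `|V(G)|` minimal.  Then no vertex is
both adjacent to a vertex of degree 2 and incident to an edge of `M`. -/
theorem M_edge_not_near_two_vertex (c : ℕ) (hc : 2 ≤ c) (n m : ℕ)
    (G : Multigraph (Fin n) (Fin m)) (A M : Set (Fin m))
    (hcex : G.AMCounterexample c A M)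
    (hmin : ∀ (n' m' : ℕ) (G' : Multigraph (Fin n') (Fin m'))
      (A' M' : Set (Fin m')), G'.AMCounterexample c A' M' →
      M.ncard ≤ M'.ncard ∧ (M.ncard = M'.ncard → n ≤ n')) :
    ∀ v : Fin n, (∃ u, G.Adj Set.univ v u ∧ G.deg Set.univ u = 2) →
      ¬ ∃ e ∈ M, v ∈ G.ends e := by
  classical
  intro v hv
  rintro ⟨e, heM, hve⟩
  obtain ⟨u, hadj, hdeg2⟩ := hv
  obtain ⟨huniv, hdisjAM, ⟨T1, T2, hT12, hTd, hT1, hT2⟩, hnogood⟩ := hcex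
  obtain ⟨g0, -, hg0E⟩ := hadj
  have hvu : v ≠ u := Multigraph.ends_ne hg0E
  obtain ⟨e1, he1T, hue1⟩ := Multigraph.exists_inc hT1.1 (show u ≠ v from hvu.symm)
  obtain ⟨e2, he2T, hue2⟩ := Multigraph.exists_inc hT2.1 (show u ≠ v from hvu.symm)
  have he12 : e1 ≠ e2 := fun h => Set.disjoint_left.mp hTd he1T (h ▸ he2T)
  have hpair : ({e1, e2} : Set (Fin m)) = G.incEdges Set.univ u := by
    apply Set.eq_of_subset_of_ncard_le
    · rintro g hg
      rcases Set.mem_insert_iff.mp hg with rfl | hg'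
      · exact ⟨trivial, hue1⟩
      · rcases Set.mem_singleton_iff.mp hg' with rfl
        exact ⟨trivial, hue2⟩
    · rw [show (G.incEdges Set.univ u).ncard = 2 from hdeg2, Set.ncard_pair he12]
    · exact Set.toFinite _
  have huniqU : ∀ g : Fin m, u ∈ G.ends g → g = e1 ∨ g = e2 := by
    intro g hg
    have : g ∈ ({e1, e2} : Set (Fin m)) := by
      rw [hpair]; exact ⟨trivial, hg⟩
    simpa using this
  obtain ⟨w1, hw1⟩ := Sym2.mem_iff_exists.mp hue1
  obtain ⟨w2, hw2⟩ := Sym2.mem_iff_exists.mp hue2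
  obtain ⟨x, hx⟩ := Sym2.mem_iff_exists.mp hve
  have hg0mem : u ∈ G.ends g0 := by rw [hg0E]; exact Sym2.mem_mk_right _ _
  rcases huniqU g0 hg0mem with h | h
  · have hv1 : G.ends e1 = s(u, v) := by rw [← h, hg0E, Sym2.eq_swap]
    exact Multigraph.main_core c hc n m G A M huniv hdisjAM hnogood hmin
      T1 T2 hT12 hTd hT1 hT2 u v w2 x e e1 e2 he1T he2T hv1 hw2 heM hx huniqU
  · have hv2 : G.ends e2 = s(u, v) := by rw [← h, hg0E, Sym2.eq_swap]
    exact Multigraph.main_core c hc n m G A M huniv hdisjAM hnogood hmin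
      T2 T1 (by rw [Set.union_comm]; exact hT12) hTd.symm hT2 hT1
      u v w1 x e e2 e1 he2T he1T hv2 hw1 heM hx
      (fun g hg => (huniqU g hg).symm)
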